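/- Let H be a subgroup of SU(2) with H ⊆ T ∪ wT, let r > 2, and suppose the r-th term of the lower central series satisfies Γ^r(H) = μ_{2^n} for some n ≥ 1. Then Γ^{r−1}(H) = μ_{2^{n+1}}. -/

import Mathlib

open Matrix Complex

noncomputable section

abbrev SU2 := Matrix.specialUnitaryGroup (Fin 2) ℂ

instance SU2.instGroup : Group SU2 :=
  { (inferInstance : Monoid SU2) with
    inv := fun A => ⟨star A.1, by
      rcases A.2 with ⟨hu, hd⟩
      refine ⟨⟨?_, ?_⟩, ?_⟩
      · simpa using hu.2
      · simpa using hu.1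
      · show (star A.1).det = 1
        rw [Matrix.star_eq_conjTranspose, Matrix.det_conjTranspose]
        simp [show A.1.det = 1 from hd]⟩
    inv_mul_cancel := fun A => Subtype.ext A.2.1.1 }

lemma w_mem : !![(0:ℂ), -1; 1, 0] ∈ Matrix.specialUnitaryGroup (Fin 2) ℂ := by
  rw [Matrix.mem_specialUnitaryGroup_iff, Matrix.mem_unitaryGroup_iff]
  constructor
  · ext i j
    fin_cases i <;> fin_cases j <;>
      simp [Matrix.mul_apply, Fin.sum_univ_two, Matrix.star_apply, Complex.star_def]
  · simp [Matrix.det_fin_two]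

def w : SU2 := ⟨!![(0:ℂ), -1; 1, 0], w_mem⟩

lemma xi_conj (m : ℕ) : (starRingEnd ℂ) (2 * Real.pi * Complex.I / m) =
    -(2 * Real.pi * Complex.I / m) := by
  simp [map_div₀, Complex.conj_I, Complex.conj_ofReal, map_ofNat]
  ring

lemma xi_conj_exp (m : ℕ) : (starRingEnd ℂ) (Complex.exp (2 * Real.pi * Complex.I / m)) =
    Complex.exp (-(2 * Real.pi * Complex.I / m)) := by
  rw [← Complex.exp_conj, xi_conj]

lemma xi_conj_exp' (m : ℕ) : (starRingEnd ℂ) (Complex.exp (-(2 * Real.pi * Complex.I / m))) =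
    Complex.exp (2 * Real.pi * Complex.I / m) := by
  rw [← Complex.exp_conj, map_neg, xi_conj, neg_neg]

lemma xi_mem (m : ℕ) :
    !![Complex.exp (2 * Real.pi * Complex.I / m), 0; 0,
       Complex.exp (-(2 * Real.pi * Complex.I / m))]
      ∈ Matrix.specialUnitaryGroup (Fin 2) ℂ := by
  rw [Matrix.mem_specialUnitaryGroup_iff, Matrix.mem_unitaryGroup_iff]
  have hstar : star (!![Complex.exp (2 * Real.pi * Complex.I / m), 0; 0,
       Complex.exp (-(2 * Real.pi * Complex.I / m))]) =
      !![Complex.exp (-(2 * Real.pi * Complex.I / m)), 0; 0,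
       Complex.exp (2 * Real.pi * Complex.I / m)] := by
    ext i j
    fin_cases i <;> fin_cases j <;>
      simp [Matrix.star_apply, Complex.star_def, xi_conj_exp m, xi_conj_exp' m]
  constructor
  · rw [hstar]
    ext i j
    fin_cases i <;> fin_cases j <;>
      simp [Matrix.mul_apply, Fin.sum_univ_two, ← Complex.exp_add]
  · simp [Matrix.det_fin_two, ← Complex.exp_add]

def ξ (m : ℕ) : SU2 :=
  ⟨!![Complex.exp (2 * Real.pi * Complex.I / m), 0; 0,
      Complex.exp (-(2 * Real.pi * Complex.I / m))], xi_mem m⟩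

/-- `μ m` : the cyclic subgroup of `SU2` generated by `ξ m`. -/
def μ (m : ℕ) : Subgroup SU2 := Subgroup.zpowers (ξ m)

/-- `genQ q` is the generalized quaternion group `Q_{2^{q+1}} ⊆ SU2`,
generated by `ξ_{2^q}` and `w`. -/
def genQ (q : ℕ) : Subgroup SU2 := Subgroup.closure {ξ (2 ^ q), w}

/-- Lower central series of a subgroup, as subgroups of the ambient group:
`lcs H k = Γ^{k+1}(H)`, so `lcs H 0 = Γ¹(H) = H` and `lcs H (k+1) = ⁅lcs H k, H⁆`. -/
def lcs {G : Type*} [Group G] (H : Subgroup G) : ℕ → Subgroup G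
  | 0 => H
  | (k + 1) => ⁅lcs H k, H⁆

/-- The set of diagonal matrices in `SU2`: the maximal torus `T`. -/
def Tset : Set SU2 :=
  {x | (x : Matrix (Fin 2) (Fin 2) ℂ) 0 1 = 0 ∧ (x : Matrix (Fin 2) (Fin 2) ℂ) 1 0 = 0}

/-- The set of anti-diagonal matrices in `SU2`: the coset `wT`. -/
def wTset : Set SU2 :=
  {x | (x : Matrix (Fin 2) (Fin 2) ℂ) 0 0 = 0 ∧ (x : Matrix (Fin 2) (Fin 2) ℂ) 1 1 = 0}

/-- `PU(2)`, the quotient of `SU(2)` by its center `{±I}`. -/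
abbrev PU2 := SU2 ⧸ Subgroup.center SU2

open scoped commutatorElement

namespace Helpers

lemma su2_inv_apply (x : SU2) (i j : Fin 2) :
    ((x⁻¹ : SU2) : Matrix (Fin 2) (Fin 2) ℂ) i j =
      (starRingEnd ℂ) ((x : Matrix (Fin 2) (Fin 2) ℂ) j i) := rfl

lemma su2_mul_apply (x y : SU2) (i j : Fin 2) :
    ((x * y : SU2) : Matrix (Fin 2) (Fin 2) ℂ) i j =
      (x : Matrix (Fin 2) (Fin 2) ℂ) i 0 * (y : Matrix (Fin 2) (Fin 2) ℂ) 0 j +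
      (x : Matrix (Fin 2) (Fin 2) ℂ) i 1 * (y : Matrix (Fin 2) (Fin 2) ℂ) 1 j := by
  show ((x : Matrix (Fin 2) (Fin 2) ℂ) * y) i j = _
  rw [Matrix.mul_apply, Fin.sum_univ_two]

lemma su2_one_apply (i j : Fin 2) :
    ((1 : SU2) : Matrix (Fin 2) (Fin 2) ℂ) i j = if i = j then 1 else 0 := by
  show (1 : Matrix (Fin 2) (Fin 2) ℂ) i j = _
  simp [Matrix.one_apply]

lemma su2_det (x : SU2) :
    (x : Matrix (Fin 2) (Fin 2) ℂ) 0 0 * (x : Matrix (Fin 2) (Fin 2) ℂ) 1 1 -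
    (x : Matrix (Fin 2) (Fin 2) ℂ) 0 1 * (x : Matrix (Fin 2) (Fin 2) ℂ) 1 0 = 1 := by
  have := (Matrix.mem_specialUnitaryGroup_iff.mp x.2).2
  rwa [Matrix.det_fin_two] at this

lemma su2_unit00 (x : SU2) :
    (x : Matrix (Fin 2) (Fin 2) ℂ) 0 0 * (starRingEnd ℂ) ((x : Matrix (Fin 2) (Fin 2) ℂ) 0 0) +
    (x : Matrix (Fin 2) (Fin 2) ℂ) 0 1 * (starRingEnd ℂ) ((x : Matrix (Fin 2) (Fin 2) ℂ) 0 1) = 1 := by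
  have h : (x : Matrix (Fin 2) (Fin 2) ℂ) * star (x : Matrix (Fin 2) (Fin 2) ℂ) = 1 := Matrix.mem_unitaryGroup_iff.mp (Matrix.mem_specialUnitaryGroup_iff.mp x.2).1
  have := congrFun (congrFun h 0) 0
  rw [Matrix.mul_apply, Fin.sum_univ_two] at this
  simpa [Matrix.star_apply, Matrix.one_apply] using this

end Helpers
namespace Helpers

lemma su2_unit11 (x : SU2) :
    (x : Matrix (Fin 2) (Fin 2) ℂ) 1 0 * (starRingEnd ℂ) ((x : Matrix (Fin 2) (Fin 2) ℂ) 1 0) +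
    (x : Matrix (Fin 2) (Fin 2) ℂ) 1 1 * (starRingEnd ℂ) ((x : Matrix (Fin 2) (Fin 2) ℂ) 1 1) = 1 := by
  have h : (x : Matrix (Fin 2) (Fin 2) ℂ) * star (x : Matrix (Fin 2) (Fin 2) ℂ) = 1 :=
    Matrix.mem_unitaryGroup_iff.mp (Matrix.mem_specialUnitaryGroup_iff.mp x.2).1
  have := congrFun (congrFun h 1) 1
  rw [Matrix.mul_apply, Fin.sum_univ_two] at this
  simpa [Matrix.star_apply, Matrix.one_apply] using this

-- scalar facts for diagonal elements
lemma T_conj11 {t : SU2} (ht : t ∈ Tset) :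
    (starRingEnd ℂ) ((t : Matrix (Fin 2) (Fin 2) ℂ) 1 1) = (t : Matrix (Fin 2) (Fin 2) ℂ) 0 0 := by
  have had := su2_det t
  rw [ht.1, ht.2] at had
  have hdd := su2_unit11 t
  rw [ht.2] at hdd
  simp at had hdd
  linear_combination (t : Matrix (Fin 2) (Fin 2) ℂ) 0 0 * hdd -
    (starRingEnd ℂ) ((t : Matrix (Fin 2) (Fin 2) ℂ) 1 1) * had

lemma T_conj00 {t : SU2} (ht : t ∈ Tset) :
    (starRingEnd ℂ) ((t : Matrix (Fin 2) (Fin 2) ℂ) 0 0) = (t : Matrix (Fin 2) (Fin 2) ℂ) 1 1 := by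
  have had := su2_det t
  rw [ht.1, ht.2] at had
  have haa := su2_unit00 t
  rw [ht.1] at haa
  simp at had haa
  linear_combination (t : Matrix (Fin 2) (Fin 2) ℂ) 1 1 * haa -
    (starRingEnd ℂ) ((t : Matrix (Fin 2) (Fin 2) ℂ) 0 0) * had

-- scalar facts for antidiagonal elements
lemma w_conj01 {x : SU2} (hx : x ∈ wTset) :
    (starRingEnd ℂ) ((x : Matrix (Fin 2) (Fin 2) ℂ) 0 1) = -(x : Matrix (Fin 2) (Fin 2) ℂ) 1 0 := by
  have hbc := su2_det x
  rw [hx.1, hx.2] at hbc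
  have hbb := su2_unit00 x
  rw [hx.1] at hbb
  simp at hbc hbb
  linear_combination -((x : Matrix (Fin 2) (Fin 2) ℂ) 1 0) * hbb -
    (starRingEnd ℂ) ((x : Matrix (Fin 2) (Fin 2) ℂ) 0 1) * hbc

lemma w_conj10 {x : SU2} (hx : x ∈ wTset) :
    (starRingEnd ℂ) ((x : Matrix (Fin 2) (Fin 2) ℂ) 1 0) = -(x : Matrix (Fin 2) (Fin 2) ℂ) 0 1 := by
  have hbc := su2_det x
  rw [hx.1, hx.2] at hbc
  have hcc := su2_unit11 x
  rw [hx.2] at hcc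
  simp at hbc hcc
  linear_combination -((x : Matrix (Fin 2) (Fin 2) ℂ) 0 1) * hcc -
    (starRingEnd ℂ) ((x : Matrix (Fin 2) (Fin 2) ℂ) 1 0) * hbc

end Helpers
namespace Helpers

lemma Tset_one : (1 : SU2) ∈ Tset := by
  constructor <;> simp [su2_one_apply]

lemma Tset_mul {t s : SU2} (ht : t ∈ Tset) (hs : s ∈ Tset) : t * s ∈ Tset := by
  constructor <;> simp [su2_mul_apply, ht.1, ht.2, hs.1, hs.2]

lemma Tset_inv {t : SU2} (ht : t ∈ Tset) : t⁻¹ ∈ Tset := by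
  constructor <;> simp [su2_inv_apply, ht.1, ht.2]

lemma wTset_mul {x y : SU2} (hx : x ∈ wTset) (hy : y ∈ wTset) : x * y ∈ Tset := by
  constructor <;> simp [su2_mul_apply, hx.1, hx.2, hy.1, hy.2]

lemma wTset_inv {x : SU2} (hx : x ∈ wTset) : x⁻¹ ∈ wTset := by
  constructor <;> simp [su2_inv_apply, hx.1, hx.2]

lemma Tset_ext {t s : SU2} (ht : t ∈ Tset) (hs : s ∈ Tset)
    (h00 : (t : Matrix (Fin 2) (Fin 2) ℂ) 0 0 = (s : Matrix (Fin 2) (Fin 2) ℂ) 0 0) : t = s := by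
  have h11 : (t : Matrix (Fin 2) (Fin 2) ℂ) 1 1 = (s : Matrix (Fin 2) (Fin 2) ℂ) 1 1 := by
    rw [← T_conj11 ht, ← T_conj11 hs] at h00
    have := congrArg (starRingEnd ℂ) h00
    simpa using this
  apply Subtype.ext
  ext i j
  fin_cases i <;> fin_cases j <;> simp_all [ht.1, ht.2, hs.1, hs.2]

lemma Tset_commute {t s : SU2} (ht : t ∈ Tset) (hs : s ∈ Tset) : t * s = s * t := by
  apply Tset_ext (Tset_mul ht hs) (Tset_mul hs ht)
  simp [su2_mul_apply, ht.1, ht.2, hs.1, hs.2, mul_comm]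

lemma Tw_mul {t x : SU2} (ht : t ∈ Tset) (hx : x ∈ wTset) : t * x ∈ wTset := by
  constructor <;> simp [su2_mul_apply, ht.1, ht.2, hx.1, hx.2]

lemma wT_mul {x t : SU2} (hx : x ∈ wTset) (ht : t ∈ Tset) : x * t ∈ wTset := by
  constructor <;> simp [su2_mul_apply, ht.1, ht.2, hx.1, hx.2]

lemma comm_T_w {t x : SU2} (ht : t ∈ Tset) (hx : x ∈ wTset) : ⁅t, x⁆ = t ^ 2 := by
  rw [commutatorElement_def, pow_two]
  apply Tset_ext
  · exact wTset_mul (wT_mul (Tw_mul ht hx) (Tset_inv ht)) (wTset_inv hx)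
  · exact Tset_mul ht ht
  · simp only [su2_mul_apply, su2_inv_apply, ht.1, ht.2, hx.1, hx.2, map_zero,
      zero_mul, mul_zero, add_zero, zero_add]
    rw [T_conj11 ht, w_conj01 hx]
    have hbc := su2_det x
    rw [hx.1, hx.2] at hbc
    simp at hbc
    linear_combination ((t : Matrix (Fin 2) (Fin 2) ℂ) 0 0 * (t : Matrix (Fin 2) (Fin 2) ℂ) 0 0) * hbc

end Helpers
namespace Helpers

lemma T_conj00_inv {t : SU2} (ht : t ∈ Tset) :
    (starRingEnd ℂ) ((t : Matrix (Fin 2) (Fin 2) ℂ) 0 0) =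
      ((t : Matrix (Fin 2) (Fin 2) ℂ) 0 0)⁻¹ := by
  have haa := su2_unit00 t
  rw [ht.1] at haa
  simp at haa
  exact (inv_eq_of_mul_eq_one_right haa).symm

lemma Tset_pow {t : SU2} (ht : t ∈ Tset) (m : ℕ) :
    t ^ m ∈ Tset ∧ ((t ^ m : SU2) : Matrix (Fin 2) (Fin 2) ℂ) 0 0 =
      ((t : Matrix (Fin 2) (Fin 2) ℂ) 0 0) ^ m := by
  induction m with
  | zero => exact ⟨Tset_one, by simp [su2_one_apply]⟩
  | succ k ih =>
    refine ⟨by rw [pow_succ]; exact Tset_mul ih.1 ht, ?_⟩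
    rw [pow_succ, pow_succ, su2_mul_apply, ih.2, ih.1.1]
    ring

lemma Tset_zpow {t : SU2} (ht : t ∈ Tset) (j : ℤ) :
    t ^ j ∈ Tset ∧ ((t ^ j : SU2) : Matrix (Fin 2) (Fin 2) ℂ) 0 0 =
      ((t : Matrix (Fin 2) (Fin 2) ℂ) 0 0) ^ j := by
  cases j with
  | ofNat m =>
    simpa [zpow_natCast] using Tset_pow ht m
  | negSucc m =>
    have hp := Tset_pow ht (m + 1)
    rw [zpow_negSucc]
    refine ⟨Tset_inv hp.1, ?_⟩
    rw [su2_inv_apply, hp.2, map_pow, T_conj00_inv ht]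
    rw [zpow_negSucc, inv_pow]

lemma xi_Tset (m : ℕ) : ξ m ∈ Tset := by
  constructor <;> simp [ξ]

lemma xi_00 (m : ℕ) : ((ξ m : SU2) : Matrix (Fin 2) (Fin 2) ℂ) 0 0 =
    Complex.exp (2 * Real.pi * Complex.I / m) := by
  simp [ξ]

lemma xi_zpow_00 (m : ℕ) (j : ℤ) :
    ((ξ m ^ j : SU2) : Matrix (Fin 2) (Fin 2) ℂ) 0 0 =
      Complex.exp (j * (2 * Real.pi * Complex.I / m)) := by
  rw [(Tset_zpow (xi_Tset m) j).2, xi_00, ← Complex.exp_int_mul]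

lemma xi_zpow_eq_one_iff {m : ℕ} (hm : m ≠ 0) (j : ℤ) :
    ξ m ^ j = 1 ↔ (m : ℤ) ∣ j := by
  have hm' : (m : ℂ) ≠ 0 := Nat.cast_ne_zero.mpr hm
  constructor
  · intro hj
    have h00 := congrArg (fun z : SU2 => (z : Matrix (Fin 2) (Fin 2) ℂ) 0 0) hj
    simp only [xi_zpow_00, su2_one_apply, if_true, eq_self_iff_true] at h00
    rw [Complex.exp_eq_one_iff] at h00
    obtain ⟨k, hk⟩ := h00
    refine ⟨k, ?_⟩
    have h2pi : (2 : ℂ) * Real.pi * Complex.I ≠ 0 := by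
      simpa [mul_comm] using Complex.two_pi_I_ne_zero
    have h2 : (j : ℂ) = m * k := by
      field_simp [hm'] at hk
      have hk2 : (j : ℂ) * (2 * Real.pi * Complex.I) =
          ((m : ℂ) * k) * (2 * Real.pi * Complex.I) := by linear_combination (2 * Real.pi * Complex.I) * hk
      exact mul_right_cancel₀ h2pi hk2
    exact_mod_cast h2
  · rintro ⟨k, rfl⟩
    apply Tset_ext (Tset_zpow (xi_Tset m) _).1 Tset_one
    rw [xi_zpow_00, su2_one_apply, if_pos rfl]
    rw [Complex.exp_eq_one_iff]
    exact ⟨k, by push_cast; field_simp⟩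

lemma xi_sq (n : ℕ) : ξ (2 ^ (n + 1)) ^ (2 : ℤ) = ξ (2 ^ n) := by
  apply Tset_ext (Tset_zpow (xi_Tset _) _).1 (xi_Tset _)
  rw [xi_zpow_00, xi_00]
  congr 1
  have h1 : ((2 ^ (n + 1) : ℕ) : ℂ) = 2 * 2 ^ n := by push_cast; ring
  have h2 : ((2 ^ n : ℕ) : ℂ) = 2 ^ n := by push_cast; ring
  rw [h1, h2]
  have : (2 : ℂ) ^ n ≠ 0 := pow_ne_zero _ two_ne_zero
  field_simp
  ring

end Helpers
namespace Helpers

def Tsub : Subgroup SU2 where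
  carrier := Tset
  one_mem' := Tset_one
  mul_mem' := fun h1 h2 => Tset_mul h1 h2
  inv_mem' := fun h1 => Tset_inv h1

lemma comm_mem_Tset {g h : SU2} (hg : g ∈ Tset ∪ wTset) (hh : h ∈ Tset ∪ wTset) :
    ⁅g, h⁆ ∈ Tset := by
  rcases hg with hg | hg <;> rcases hh with hh | hh
  · rw [commutatorElement_def]
    exact Tset_mul (Tset_mul (Tset_mul hg hh) (Tset_inv hg)) (Tset_inv hh)
  · rw [comm_T_w hg hh]
    exact (Tset_pow hg 2).1
  · rw [← commutatorElement_inv, comm_T_w hh hg]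
    exact Tset_inv (Tset_pow hh 2).1
  · rw [commutatorElement_def, mul_assoc (g * h)]
    exact Tset_mul (wTset_mul hg hh) (wTset_mul (wTset_inv hg) (wTset_inv hh))

lemma lcs_succ {G : Type*} [Group G] (H : Subgroup G) (k : ℕ) :
    lcs H (k + 1) = ⁅lcs H k, H⁆ := rfl

lemma lcs_le_self {G : Type*} [Group G] (H : Subgroup G) : ∀ k, lcs H k ≤ H := by
  intro k
  induction k with
  | zero => exact le_rfl
  | succ k ih =>
    rw [lcs_succ, Subgroup.commutator_le]
    intro g hg h' hh'
    rw [commutatorElement_def]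
    exact mul_mem (mul_mem (mul_mem (ih hg) hh') (inv_mem (ih hg))) (inv_mem hh')

lemma exp_half (n : ℕ) :
    Complex.exp (2 * Real.pi * Complex.I / ((2 ^ (n + 1) : ℕ) : ℂ)) ^ (((2 ^ n : ℕ) : ℤ)) = -1 := by
  rw [← Complex.exp_int_mul]
  rw [show (((2 ^ n : ℕ) : ℤ) : ℂ) * (2 * Real.pi * Complex.I / ((2 ^ (n + 1) : ℕ) : ℂ)) =
      Real.pi * Complex.I by
    have h2 : ((2 ^ (n + 1) : ℕ) : ℂ) = 2 * 2 ^ n := by push_cast; ring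
    rw [h2]
    have : (2 : ℂ) ^ n ≠ 0 := pow_ne_zero _ two_ne_zero
    push_cast
    field_simp]
  exact Complex.exp_pi_mul_I

lemma arg_double (n : ℕ) :
    2 * Real.pi * Complex.I / ((2 ^ n : ℕ) : ℂ) =
      2 * (2 * Real.pi * Complex.I / ((2 ^ (n + 1) : ℕ) : ℂ)) := by
  have h2 : ((2 ^ (n + 1) : ℕ) : ℂ) = 2 * 2 ^ n := by push_cast; ring
  have h3 : ((2 ^ n : ℕ) : ℂ) = 2 ^ n := by push_cast; ring
  rw [h2, h3]
  have : (2 : ℂ) ^ n ≠ 0 := pow_ne_zero _ two_ne_zero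
  field_simp

end Helpers
namespace Helpers

lemma mem_mu_succ_of_sq {n : ℕ} {k : SU2} (hkT : k ∈ Tset) (hk2 : k ^ 2 ∈ μ (2 ^ n)) :
    k ∈ μ (2 ^ (n + 1)) := by
  obtain ⟨j, hj⟩ := Subgroup.mem_zpowers_iff.mp hk2
  set a := (k : Matrix (Fin 2) (Fin 2) ℂ) 0 0 with ha
  set e := Complex.exp (2 * Real.pi * Complex.I / ((2 ^ (n + 1) : ℕ) : ℂ)) with he
  have hEntry : a ^ 2 = e ^ (2 * j) := by
    have h1 := congrArg (fun z : SU2 => (z : Matrix (Fin 2) (Fin 2) ℂ) 0 0) hj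
    simp only [xi_zpow_00] at h1
    rw [(Tset_pow hkT 2).2] at h1
    rw [← h1, arg_double n]
    rw [← Complex.exp_int_mul]
    congr 1
    push_cast
    ring
  have hsplit : a = e ^ j ∨ a = -(e ^ j) := by
    have hz : (a - e ^ j) * (a + e ^ j) = 0 := by
      have : (e ^ j) ^ 2 = e ^ (2 * j) := by
        rw [← zpow_natCast (e ^ j) 2, ← _root_.zpow_mul]
        congr 1
        push_cast; ring
      linear_combination hEntry - this
    rcases mul_eq_zero.mp hz with h | h
    · left; exact sub_eq_zero.mp h
    · right; exact eq_neg_of_add_eq_zero_left h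
  have hene : e ≠ 0 := Complex.exp_ne_zero _
  have key : ∃ m : ℤ, a = e ^ m := by
    rcases hsplit with h | h
    · exact ⟨j, h⟩
    · refine ⟨j + ((2 ^ n : ℕ) : ℤ), ?_⟩
      rw [zpow_add₀ hene, exp_half n, h]
      ring
  obtain ⟨m, hm⟩ := key
  have : ξ (2 ^ (n + 1)) ^ m = k := by
    apply Tset_ext (Tset_zpow (xi_Tset _) m).1 hkT
    rw [xi_zpow_00, Complex.exp_int_mul, ← he, ← ha, hm]
  exact Subgroup.mem_zpowers_iff.mpr ⟨m, this⟩

end Helpers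
namespace Helpers

lemma xi_mem_of_sq {n : ℕ} (hn : 1 ≤ n) {k : SU2} (hkT : k ∈ Tset)
    (hk2 : k ^ 2 = ξ (2 ^ n)) : ξ (2 ^ (n + 1)) ∈ Subgroup.zpowers k := by
  have hk2' : k ^ 2 ∈ μ (2 ^ n) := by rw [hk2]; exact Subgroup.mem_zpowers _
  obtain ⟨m, hmk⟩ := Subgroup.mem_zpowers_iff.mp (mem_mu_succ_of_sq hkT hk2')
  have h1 : ξ (2 ^ (n + 1)) ^ (m * 2) = ξ (2 ^ n) := by
    rw [_root_.zpow_mul, hmk, ← hk2]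
    norm_cast
  have h2 : ξ (2 ^ (n + 1)) ^ (m * 2 - 2) = 1 := by
    rw [_root_.zpow_sub, h1, xi_sq n, mul_inv_cancel]
  have hd := (xi_zpow_eq_one_iff (by positivity) _).mp h2
  have hd' : (2 : ℤ) ^ (n + 1) ∣ (m * 2 - 2) := by push_cast at hd; exact hd
  obtain ⟨t, ht⟩ := hd'
  have h4 : m * 2 - 2 = 2 * (2 ^ n * t) := by rw [ht]; ring
  have hm1 : m - 1 = 2 ^ n * t := by linarith
  have hodd : ¬ (2 : ℤ) ∣ m := by
    have hn' : (2 : ℤ) ^ n = 2 * 2 ^ (n - 1) := by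
      conv_lhs => rw [show n = (n - 1) + 1 by omega]
      ring
    have h5 : m = 1 + 2 * (2 ^ (n - 1) * t) := by rw [hn'] at hm1; linarith
    omega
  have hco : IsCoprime ((2 : ℤ) ^ (n + 1)) m :=
    (((Prime.coprime_iff_not_dvd Int.prime_two).mpr hodd)).pow_left
  obtain ⟨u, v, huv⟩ := hco
  have hMone : ξ (2 ^ (n + 1)) ^ ((2 : ℤ) ^ (n + 1)) = 1 := by
    refine (xi_zpow_eq_one_iff (by positivity) _).mpr ⟨1, by push_cast; ring⟩
  have hfinal : ξ (2 ^ (n + 1)) = k ^ v := by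
    calc ξ (2 ^ (n + 1)) = ξ (2 ^ (n + 1)) ^ (1 : ℤ) := (zpow_one _).symm
      _ = ξ (2 ^ (n + 1)) ^ (u * 2 ^ (n + 1) + v * m) := by rw [huv]
      _ = (ξ (2 ^ (n + 1)) ^ ((2 : ℤ) ^ (n + 1))) ^ u * (ξ (2 ^ (n + 1)) ^ m) ^ v := by
          rw [_root_.zpow_add, mul_comm u _, mul_comm v m, _root_.zpow_mul, _root_.zpow_mul]
      _ = k ^ v := by rw [hMone, hmk, _root_.one_zpow, one_mul]
  exact Subgroup.mem_zpowers_iff.mpr ⟨v, hfinal.symm⟩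

end Helpers
theorem stmt5 (H : Subgroup SU2) (hsub : (H : Set SU2) ⊆ Tset ∪ wTset) (r n : ℕ)
    (hr : 2 < r) (hn : 1 ≤ n) (h : lcs H (r - 1) = μ (2 ^ n)) :
    lcs H (r - 2) = μ (2 ^ (n + 1)) := by
  classical
  open Helpers in
  have h3 : r - 1 = (r - 2) + 1 := by omega
  rw [h3, lcs_succ] at h
  set K := lcs H (r - 2) with hKdef
  have hKH : K ≤ H := lcs_le_self H _
  have hKT : ∀ k ∈ K, k ∈ Tset := by
    obtain ⟨j, hj⟩ : ∃ j, r - 2 = j + 1 := ⟨r - 3, by omega⟩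
    intro k hk
    rw [hKdef, hj, lcs_succ] at hk
    have hle : (⁅lcs H j, H⁆ : Subgroup SU2) ≤ Tsub := by
      rw [Subgroup.commutator_le]
      intro g hg h' hh'
      exact comm_mem_Tset (hsub (lcs_le_self H j hg)) (hsub hh')
    exact hle hk
  -- case: H has an antidiagonal element
  by_cases hcase : ∃ x ∈ H, x ∈ wTset
  · obtain ⟨x, hxH, hxw⟩ := hcase
    -- squares subgroup
    let S : Subgroup SU2 :=
      { carrier := {y | ∃ k, k ∈ K ∧ k ∈ Tset ∧ k ^ 2 = y}
        one_mem' := ⟨1, one_mem K, Tset_one, one_pow 2⟩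
        mul_mem' := by
          rintro y z ⟨k, hk, hkT', rfl⟩ ⟨l, hl, hlT', rfl⟩
          refine ⟨k * l, mul_mem hk hl, Tset_mul hkT' hlT', ?_⟩
          have hc : Commute k l := Tset_commute hkT' hlT'
          rw [hc.mul_pow]
        inv_mem' := by
          rintro y ⟨k, hk, hkT', rfl⟩
          exact ⟨k⁻¹, inv_mem hk, Tset_inv hkT', by rw [inv_pow]⟩ }
    have hsq_mem : ∀ k ∈ K, k ^ 2 ∈ μ (2 ^ n) := by
      intro k hk
      rw [← h, ← comm_T_w (hKT k hk) hxw]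
      exact Subgroup.commutator_mem_commutator hk hxH
    have hcomm_le : (⁅K, H⁆ : Subgroup SU2) ≤ S := by
      rw [Subgroup.commutator_le]
      intro g hg h' hh'
      rcases hsub hh' with hh'T | hh'w
      · have : ⁅g, h'⁆ = 1 := by
          rw [commutatorElement_eq_one_iff_commute]
          exact Tset_commute (hKT g hg) hh'T
        rw [this]; exact one_mem S
      · rw [comm_T_w (hKT g hg) hh'w]
        exact ⟨g, hg, hKT g hg, rfl⟩
    have hxi_in_S : ∃ k, k ∈ K ∧ k ∈ Tset ∧ k ^ 2 = ξ (2 ^ n) :=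
      hcomm_le (h ▸ Subgroup.mem_zpowers (ξ (2 ^ n)))
    obtain ⟨k₀, hk₀K, hk₀T, hk₀2⟩ := hxi_in_S
    apply le_antisymm
    · intro k hk
      exact mem_mu_succ_of_sq (hKT k hk) (hsq_mem k hk)
    · show μ (2 ^ (n + 1)) ≤ K
      rw [μ, Subgroup.zpowers_le]
      have := xi_mem_of_sq hn hk₀T hk₀2
      obtain ⟨v, hv⟩ := Subgroup.mem_zpowers_iff.mp this
      rw [← hv]
      exact Subgroup.zpow_mem K hk₀K v
  -- case: H ⊆ T, contradiction
  · exfalso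
    have hHT : ∀ g ∈ H, g ∈ Tset := by
      intro g hg
      rcases hsub hg with hgT | hgw
      · exact hgT
      · exact absurd ⟨g, hg, hgw⟩ hcase
    have hbot : (⁅K, H⁆ : Subgroup SU2) ≤ ⊥ := by
      rw [Subgroup.commutator_le]
      intro g hg h' hh'
      rw [Subgroup.mem_bot, commutatorElement_eq_one_iff_commute]
      exact Tset_commute (hKT g (hg : g ∈ K)) (hHT h' hh')
    have hxi_bot : ξ (2 ^ n) = 1 := by
      have : ξ (2 ^ n) ∈ (⊥ : Subgroup SU2) :=
        hbot (h ▸ Subgroup.mem_zpowers (ξ (2 ^ n)))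
      simpa [Subgroup.mem_bot] using this
    have h1 : ξ (2 ^ n) ^ (1 : ℤ) = 1 := by rw [zpow_one]; exact hxi_bot
    have hdvd := (xi_zpow_eq_one_iff (by positivity) 1).mp h1
    have hle := Int.le_of_dvd one_pos hdvd
    have : (2 : ℤ) ^ n ≤ 1 := by push_cast at hle; exact hle
    have h2n : (2 : ℤ) ^ 1 ≤ (2 : ℤ) ^ n := pow_le_pow_right₀ (by norm_num) hn
    omega
end
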